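/- In the AT = 2(C+1) configuration, after a fragmentation attack splitting correct processes into fragment A (with RRS = 1 for t, holding a chain ending with t) and fragment B (with RRS = 0, holding a chain one block longer containing the conflict t'), the fragmentation heals after at most 2 further blocks: if A's chain grows by 2 blocks it strictly exceeds B's chain length and B adopts it by the longest-chain rule; if B's chain grows by 1 block, the t'-block is suffixed by ≥ 1 block so A's rejection condition (RRS = 1) is satisfied and A adopts B's longer chain. -/

import Mathlib

/-- Healing after a fragmentation attack in the `AT = 2(C+1)` configuration.
Fragment A holds chain `cA` (length `n`, ending with `t`, no `t'`) with
`RRS_A(t) = 1`; fragment B holds chain `cB` (length `n+1`, whose last block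
contains the conflicting `t'`). Then: extending `cA` by 2 blocks makes it
strictly longer than `cB`, so B switches by the longest-chain rule; and
extending `cB` by 1 honest block leaves `t'` suffixed by ≥ 1 block, so A's
rejection condition is satisfied and A switches to the strictly longer
chain. -/
theorem fragmentation_heals_in_two_blocks
    (Block Tx : Type) (txs : Block → Set Tx) (t t' : Tx)
    (n : ℕ) (cA cB : List Block)
    (hlenA : cA.length = n) (hlenB : cB.length = n + 1)
    -- t' is contained (only) in the last block of cB
    (blast : Block) (hblast : cB[n]? = some blast) (ht' : t' ∈ txs blast)
    (honlyB : ∀ (j : ℕ) (b : Block), cB[j]? = some b → t' ∈ txs b → j = n)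
    -- cA contains no block with t'
    (hnotA : ∀ (j : ℕ) (b : Block), cA[j]? = some b → t' ∉ txs b)
    -- fragment A rejects a chain iff the block containing t' is followed by
    -- fewer than RRS_A(t) = 1 blocks
    (RejectA : List Block → Prop)
    (hRejA : ∀ c, RejectA c ↔
      ∃ (j : ℕ) (b : Block), (c)[j]? = some b ∧ t' ∈ txs b ∧
        c.length - (j + 1) < 1) :
    -- (1) extending cA by 2 blocks produces a chain strictly longer than cB
    -- (and without t', hence unrejectable), so B switches
    (∀ ext : List Block, ext.length = 2 →
      cB.length < (cA ++ ext).length ∧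
      ((∀ b ∈ ext, t' ∉ txs b) → ¬ RejectA (cA ++ ext))) ∧
    -- (2) extending cB by one honest block (not re-including t') yields a
    -- chain that A does not reject and that is strictly longer than cA,
    -- so A switches
    (∀ bnew : Block, t' ∉ txs bnew →
      ¬ RejectA (cB ++ [bnew]) ∧ cA.length < (cB ++ [bnew]).length) := by
  constructor
  · intro ext hext
    have hlen : (cA ++ ext).length = n + 2 := by
      simp [List.length_append, hlenA, hext]
    constructor
    · omega
    · intro hno hrej
      rw [hRejA] at hrej
      obtain ⟨j, b, hget, hmem, _⟩ := hrej
      by_cases hj : j < cA.length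
      · have : cA[j]? = some b := by
          rw [← hget, List.getElem?_append_left hj]
        exact hnotA j b this hmem
      · push_neg at hj
        have hb : ext[j - cA.length]? = some b := by
          rw [← hget, List.getElem?_append_right hj]
        exact hno b (List.mem_of_getElem? hb) hmem
  · intro bnew hnew
    have hlen : (cB ++ [bnew]).length = n + 2 := by
      simp [List.length_append, hlenB]
    constructor
    · intro hrej
      rw [hRejA] at hrej
      obtain ⟨j, b, hget, hmem, hlt⟩ := hrej
      by_cases hj : j < cB.length
      · have hb : cB[j]? = some b := by
          rw [← hget, List.getElem?_append_left hj]
        have := honlyB j b hb hmem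
        omega
      · push_neg at hj
        have hb : [bnew][j - cB.length]? = some b := by
          rw [← hget, List.getElem?_append_right hj]
        have hjlen : j < (cB ++ [bnew]).length := by
          exact List.getElem?_eq_some_iff.mp hget |>.1
        have : j = n + 1 := by omega
        subst this
        rw [hlenB] at hb
        simp at hb
        subst hb
        exact hnew hmem
    · rw [hlen]; omega
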